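/- Exact value theorem: with the setup of the general formalism, suppose {1,…,m} = A ⊔ B is a partition of the parties into two nonempty sets such that 𝒢_Φ(A) = 𝒢_Φ(B) = 𝒢_Φ. Then the geometric entanglement of Ψ is exactly E_G(Ψ) = n·log₂|G| − log₂|𝒢_Φ|. -/

import Mathlib

open scoped BigOperators
open scoped Classical

noncomputable section

namespace GenForm

variable {G : Type} [Group G] [Fintype G] {n m : ℕ}
  {ι : Fin m → Type} [∀ k, Fintype (ι k)] [∀ k, DecidableEq (ι k)]

/-- `O` assigns to every party `k` a unitary representation of 𝒢 = G^{×n} on the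
(concretely modelled) finite-dimensional Hilbert space H_k = (ι k → ℂ). -/
def IsLocalRep (O : (k : Fin m) → (Fin n → G) → Matrix (ι k) (ι k) ℂ) : Prop :=
  ∀ k : Fin m,
    (∀ t, O k t ∈ Matrix.unitaryGroup (ι k) ℂ) ∧
    O k 1 = 1 ∧
    ∀ t u, O k (t * u) = O k t * O k u

/-- The product vector Φ = φ₁ ⊗ ⋯ ⊗ φ_m, as an amplitude function. -/
def prodVec (φ : (k : Fin m) → ι k → ℂ) : ((k : Fin m) → ι k) → ℂ :=
  fun x => ∏ k, φ k (x k)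

/-- The vector O^t Φ = ⊗_k O_k^t φ_k. -/
def actVec (O : (k : Fin m) → (Fin n → G) → Matrix (ι k) (ι k) ℂ)
    (φ : (k : Fin m) → ι k → ℂ) (t : Fin n → G) : ((k : Fin m) → ι k) → ℂ :=
  fun x => ∏ k, ((O k t).mulVec (φ k)) (x k)

/-- The vector O_X^t Φ, where the truncated operator acts as O_k^t for k ∈ X and as
the identity elsewhere. -/
def actVecOn (O : (k : Fin m) → (Fin n → G) → Matrix (ι k) (ι k) ℂ)
    (φ : (k : Fin m) → ι k → ℂ) (X : Finset (Fin m)) (t : Fin n → G) :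
    ((k : Fin m) → ι k) → ℂ :=
  fun x => ∏ k, if k ∈ X then ((O k t).mulVec (φ k)) (x k) else φ k (x k)

/-- Each local vector O_k^t φ_k and O_k^u φ_k is either equal or orthogonal. -/
def OrthCond (O : (k : Fin m) → (Fin n → G) → Matrix (ι k) (ι k) ℂ)
    (φ : (k : Fin m) → ι k → ℂ) : Prop :=
  ∀ (k : Fin m) (t u : Fin n → G),
    (O k t).mulVec (φ k) = (O k u).mulVec (φ k) ∨
    ∑ x : ι k, (starRingEnd ℂ) (((O k t).mulVec (φ k)) x) * ((O k u).mulVec (φ k)) x = 0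

/-- The global stabiliser 𝒢_Φ = { t : O^t Φ = Φ }. -/
def globalStab (O : (k : Fin m) → (Fin n → G) → Matrix (ι k) (ι k) ℂ)
    (φ : (k : Fin m) → ι k → ℂ) : Set (Fin n → G) :=
  { t | actVec O φ t = prodVec φ }

/-- The local stabiliser 𝒢_Φ(X) = { t : O_X^t Φ = Φ }. -/
def localStab (O : (k : Fin m) → (Fin n → G) → Matrix (ι k) (ι k) ℂ)
    (φ : (k : Fin m) → ι k → ℂ) (X : Finset (Fin m)) : Set (Fin n → G) :=
  { t | actVecOn O φ X t = prodVec φ }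

/-- The symmetrized state Ψ = (|𝒢|·|𝒢_Φ|)^{-1/2} ∑_{t∈𝒢} O^t Φ. -/
def Psi (O : (k : Fin m) → (Fin n → G) → Matrix (ι k) (ι k) ℂ)
    (φ : (k : Fin m) → ι k → ℂ) : ((k : Fin m) → ι k) → ℂ :=
  fun x => (((Real.sqrt ((Fintype.card G) ^ n * Nat.card (globalStab O φ)))⁻¹ : ℝ) : ℂ) *
    ∑ t : Fin n → G, actVec O φ t x

/-- A product state of the m parties. -/
def IsProd (Φ : ((k : Fin m) → ι k) → ℂ) : Prop :=
  ∃ χ : (k : Fin m) → ι k → ℂ,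
    (∀ k, ∑ x : ι k, ‖χ k x‖ ^ 2 = 1) ∧
    ∀ x, Φ x = ∏ k, χ k (x k)

/-- Maximal overlap with product states of the parties. -/
def LMax (ψ : ((k : Fin m) → ι k) → ℂ) : ℝ :=
  sSup { r : ℝ | ∃ Φ, IsProd Φ ∧
    r = ‖∑ x : (k : Fin m) → ι k, (starRingEnd ℂ) (Φ x) * ψ x‖ }

/-- Geometric entanglement. -/
def EG (ψ : ((k : Fin m) → ι k) → ℂ) : ℝ :=
  - Real.logb 2 (LMax ψ ^ 2)

namespace GenFormMore

variable {G : Type} [Group G] [Fintype G] {n m : ℕ}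
  {ι : Fin m → Type} [∀ k, Fintype (ι k)] [∀ k, DecidableEq (ι k)]

-- abbreviation for the local vectors
def W (O : (k : Fin m) → (Fin n → G) → Matrix (ι k) (ι k) ℂ)
    (φ : (k : Fin m) → ι k → ℂ) (k : Fin m) (t : Fin n → G) : ι k → ℂ :=
  (O k t).mulVec (φ k)

variable (O : (k : Fin m) → (Fin n → G) → Matrix (ι k) (ι k) ℂ)
  (φ : (k : Fin m) → ι k → ℂ)

lemma conj_sum_eq (κ : Type) [Fintype κ] (v : κ → ℂ) :
    ∑ x : κ, (starRingEnd ℂ) (v x) * v x = ((∑ x : κ, ‖v x‖ ^ 2 : ℝ) : ℂ) := by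
  push_cast
  refine Finset.sum_congr rfl fun x _ => ?_
  rw [mul_comm, Complex.mul_conj, Complex.normSq_eq_norm_sq]
  push_cast; ring

lemma gnorm_one (hO : ∀ k : Fin m, (∀ t, O k t ∈ Matrix.unitaryGroup (ι k) ℂ) ∧
      O k 1 = 1 ∧ ∀ t u, O k (t * u) = O k t * O k u)
    (hφ : ∀ k, ∑ x : ι k, ‖φ k x‖ ^ 2 = 1) (k : Fin m) (t : Fin n → G) :
    ∑ x : ι k, (starRingEnd ℂ) (W O φ k t x) * W O φ k t x = 1 := by
  have h1 : star (O k t) * O k t = 1 := Matrix.mem_unitaryGroup_iff'.mp ((hO k).1 t)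
  have : ∑ x : ι k, (starRingEnd ℂ) (W O φ k t x) * W O φ k t x
      = dotProduct (star ((O k t).mulVec (φ k))) ((O k t).mulVec (φ k)) := by
    simp [W, dotProduct, Pi.star_apply, RCLike.star_def]
  rw [this, Matrix.star_mulVec, Matrix.dotProduct_mulVec, Matrix.vecMul_vecMul,
    ← Matrix.star_eq_conjTranspose, h1, Matrix.vecMul_one]
  have : dotProduct (star (φ k)) (φ k) = ∑ x : ι k, (starRingEnd ℂ) (φ k x) * φ k x := by
    simp [dotProduct, Pi.star_apply, RCLike.star_def]
  rw [this, conj_sum_eq, hφ k]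
  norm_num

lemma ip_eq_ite (hO : ∀ k : Fin m, (∀ t, O k t ∈ Matrix.unitaryGroup (ι k) ℂ) ∧
      O k 1 = 1 ∧ ∀ t u, O k (t * u) = O k t * O k u)
    (hφ : ∀ k, ∑ x : ι k, ‖φ k x‖ ^ 2 = 1)
    (horth : ∀ (k : Fin m) (t u : Fin n → G),
      (O k t).mulVec (φ k) = (O k u).mulVec (φ k) ∨
      ∑ x : ι k, (starRingEnd ℂ) (((O k t).mulVec (φ k)) x) * ((O k u).mulVec (φ k)) x = 0)
    (k : Fin m) (t u : Fin n → G) :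
    ∑ x : ι k, (starRingEnd ℂ) (W O φ k t x) * W O φ k u x
      = if W O φ k t = W O φ k u then 1 else 0 := by
  by_cases h : W O φ k t = W O φ k u
  · rw [if_pos h, h]
    exact gnorm_one O φ hO hφ k u
  · rw [if_neg h]
    rcases horth k t u with h' | h'
    · exact absurd h' h
    · exact h'

lemma w_one (hO : ∀ k : Fin m, (∀ t, O k t ∈ Matrix.unitaryGroup (ι k) ℂ) ∧
      O k 1 = 1 ∧ ∀ t u, O k (t * u) = O k t * O k u) (k : Fin m) :
    W O φ k 1 = φ k := by
  simp [W, (hO k).2.1, Matrix.one_mulVec]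

lemma w_eq_iff (hO : ∀ k : Fin m, (∀ t, O k t ∈ Matrix.unitaryGroup (ι k) ℂ) ∧
      O k 1 = 1 ∧ ∀ t u, O k (t * u) = O k t * O k u) (k : Fin m) (t u : Fin n → G) :
    W O φ k t = W O φ k u ↔ W O φ k (u⁻¹ * t) = φ k := by
  have hinv : O k u⁻¹ * O k u = 1 := by
    rw [← (hO k).2.2, inv_mul_cancel, (hO k).2.1]
  have hinj : Function.Injective ((O k u).mulVec : (ι k → ℂ) → (ι k → ℂ)) := by
    intro a b hab
    have := congrArg ((O k u⁻¹).mulVec) hab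
    rwa [Matrix.mulVec_mulVec, Matrix.mulVec_mulVec, hinv, Matrix.one_mulVec,
      Matrix.one_mulVec] at this
  have ht : W O φ k t = (O k u).mulVec (W O φ k (u⁻¹ * t)) := by
    rw [W, W, Matrix.mulVec_mulVec, ← (hO k).2.2, mul_inv_cancel_left]
  constructor
  · intro h
    apply hinj
    rw [← ht, h, W]
  · intro h
    rw [ht, h, W]




lemma actVecOn_one (hO : IsLocalRep O) (X : Finset (Fin m)) :
    actVecOn O φ X 1 = prodVec φ := by
  funext x
  unfold actVecOn prodVec
  refine Finset.prod_congr rfl fun k _ => ?_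
  by_cases h : k ∈ X <;> simp [h, (hO k).2.1, Matrix.one_mulVec]

lemma actVec_eq (t : Fin n → G) : actVec O φ t = actVecOn O φ Finset.univ t := by
  funext x; unfold actVec actVecOn; simp

lemma inner_actVecOn (hO : IsLocalRep O)
    (hφ : ∀ k, ∑ x : ι k, ‖φ k x‖ ^ 2 = 1) (horth : OrthCond O φ)
    (X : Finset (Fin m)) (t u : Fin n → G) :
    ∑ x : (k : Fin m) → ι k, (starRingEnd ℂ) (actVecOn O φ X t x) * actVecOn O φ X u x
      = if ∀ k ∈ X, W O φ k t = W O φ k u then 1 else 0 := by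
  have step1 : ∀ x : (k : Fin m) → ι k,
      (starRingEnd ℂ) (actVecOn O φ X t x) * actVecOn O φ X u x
      = ∏ k, (fun y => (starRingEnd ℂ) (if k ∈ X then W O φ k t y else φ k y) *
          (if k ∈ X then W O φ k u y else φ k y)) (x k) := by
    intro x
    unfold actVecOn
    rw [map_prod, ← Finset.prod_mul_distrib]
    rfl
  rw [Finset.sum_congr rfl fun x _ => step1 x,
    ← Fintype.prod_sum (f := fun (k : Fin m) (y : ι k) =>
      (starRingEnd ℂ) (if k ∈ X then W O φ k t y else φ k y) *
        (if k ∈ X then W O φ k u y else φ k y))]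
  have step2 : ∀ k : Fin m,
      (∑ y : ι k, (starRingEnd ℂ) (if k ∈ X then W O φ k t y else φ k y) *
          (if k ∈ X then W O φ k u y else φ k y))
      = if k ∈ X then (if W O φ k t = W O φ k u then (1:ℂ) else 0) else 1 := by
    intro k
    by_cases h : k ∈ X
    · simp only [h, if_true]
      exact ip_eq_ite O φ hO hφ horth k t u
    · simp only [h, if_false]
      rw [conj_sum_eq, hφ k]; norm_num
  rw [Finset.prod_congr rfl fun k _ => step2 k]
  rw [← Finset.prod_filter, Finset.filter_mem_eq_inter, Finset.univ_inter, Finset.prod_boole]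
  congr 1

lemma localStab_iff (hO : IsLocalRep O)
    (hφ : ∀ k, ∑ x : ι k, ‖φ k x‖ ^ 2 = 1) (horth : OrthCond O φ)
    (X : Finset (Fin m)) (t : Fin n → G) :
    t ∈ localStab O φ X ↔ ∀ k ∈ X, W O φ k t = φ k := by
  constructor
  · intro h
    have h' : actVecOn O φ X t = actVecOn O φ X 1 := by
      rw [actVecOn_one O φ hO]; exact h
    have h2 := inner_actVecOn O φ hO hφ horth X 1 t
    rw [h', inner_actVecOn O φ hO hφ horth X 1 1] at h2
    rw [if_pos (fun k _ => rfl)] at h2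
    intro k hk
    by_contra hne
    have hcond : ¬ ∀ k ∈ X, W O φ k 1 = W O φ k t := by
      intro hall
      exact hne ((hall k hk).symm.trans (w_one O φ hO k))
    rw [if_neg hcond] at h2
    exact one_ne_zero h2
  · intro h
    show actVecOn O φ X t = prodVec φ
    funext x
    unfold actVecOn prodVec
    refine Finset.prod_congr rfl fun k _ => ?_
    by_cases hk : k ∈ X
    · rw [if_pos hk]
      exact congrFun (h k hk) (x k)
    · rw [if_neg hk]

lemma globalStab_iff (hO : IsLocalRep O)
    (hφ : ∀ k, ∑ x : ι k, ‖φ k x‖ ^ 2 = 1) (horth : OrthCond O φ)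
    (t : Fin n → G) :
    t ∈ globalStab O φ ↔ ∀ k, W O φ k t = φ k := by
  have h : t ∈ globalStab O φ ↔ t ∈ localStab O φ Finset.univ := by
    unfold globalStab localStab
    rw [Set.mem_setOf_eq, Set.mem_setOf_eq, ← actVec_eq]
  rw [h, localStab_iff O φ hO hφ horth]
  simp


lemma prod_inner (f g : (k : Fin m) → ι k → ℂ) :
    ∑ x : (k : Fin m) → ι k, (starRingEnd ℂ) (∏ k, f k (x k)) * ∏ k, g k (x k)
      = ∏ k, ∑ y, (starRingEnd ℂ) (f k y) * g k y := by
  have step1 : ∀ x : (k : Fin m) → ι k,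
      (starRingEnd ℂ) (∏ k, f k (x k)) * ∏ k, g k (x k)
      = ∏ k, (fun y => (starRingEnd ℂ) (f k y) * g k y) (x k) := by
    intro x
    rw [map_prod, ← Finset.prod_mul_distrib]
  rw [Finset.sum_congr rfl fun x _ => step1 x,
    ← Fintype.prod_sum (f := fun (k : Fin m) (y : ι k) => (starRingEnd ℂ) (f k y) * g k y)]

end GenFormMore

/-- Exact value theorem: if the parties split into two nonempty sets
A and B = Aᶜ with 𝒢_Φ(A) = 𝒢_Φ(B) = 𝒢_Φ, then E_G(Ψ) = n·log₂|G| − log₂|𝒢_Φ|. -/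
theorem general_exact_value
    {G : Type} [Group G] [Fintype G] {n m : ℕ}
    {ι : Fin m → Type} [∀ k, Fintype (ι k)] [∀ k, DecidableEq (ι k)]
    (O : (k : Fin m) → (Fin n → G) → Matrix (ι k) (ι k) ℂ) (hO : IsLocalRep O)
    (φ : (k : Fin m) → ι k → ℂ) (hφ : ∀ k, ∑ x : ι k, ‖φ k x‖ ^ 2 = 1)
    (horth : OrthCond O φ)
    (A : Finset (Fin m)) (hA : A.Nonempty) (hB : Aᶜ.Nonempty)
    (hstabA : localStab O φ A = globalStab O φ)
    (hstabB : localStab O φ Aᶜ = globalStab O φ) :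
    EG (Psi O φ) =
      (n : ℝ) * Real.logb 2 (Fintype.card G) -
        Real.logb 2 (Nat.card (globalStab O φ) : ℝ) := by
  classical
  set W : (k : Fin m) → (Fin n → G) → ι k → ℂ := GenFormMore.W O φ with hW
  set SF : Finset (Fin n → G) := Finset.univ.filter (· ∈ globalStab O φ) with hSF
  have hone : (1 : Fin n → G) ∈ globalStab O φ := by
    rw [GenFormMore.globalStab_iff O φ hO hφ horth]
    exact fun k => GenFormMore.w_one O φ hO k
  have hSFpos : 0 < SF.card := Finset.card_pos.mpr ⟨1, by simp [hSF, hone]⟩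
  have hcardS : (Nat.card ↥(globalStab O φ)) = SF.card := by
    rw [Nat.card_eq_fintype_card, hSF]
    exact Fintype.card_subtype _
  have hrel_iff : ∀ t u : Fin n → G,
      (∀ k, W k t = W k u) ↔ u⁻¹ * t ∈ globalStab O φ := by
    intro t u
    rw [GenFormMore.globalStab_iff O φ hO hφ horth]
    exact forall_congr' fun k => GenFormMore.w_eq_iff O φ hO k t u
  have hcount : ∀ u : Fin n → G,
      (Finset.univ.filter fun t => ∀ k, W k t = W k u).card = SF.card := by
    intro u
    rw [hSF]
    apply Finset.card_nbij' (i := fun t => u⁻¹ * t) (j := fun s => u * s)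
    · intro t ht
      simp only [Finset.mem_coe, Finset.mem_filter, Finset.mem_univ, true_and] at ht ⊢
      exact (hrel_iff t u).mp ht
    · intro s hs
      simp only [Finset.mem_coe, Finset.mem_filter, Finset.mem_univ, true_and] at hs ⊢
      refine (hrel_iff (u * s) u).mpr ?_
      rwa [inv_mul_cancel_left]
    · intro t _
      simp
    · intro s _
      simp
  have hA_iff : ∀ t u : Fin n → G,
      (∀ k ∈ A, W k t = W k u) ↔ (∀ k, W k t = W k u) := by
    intro t u
    constructor
    · intro h
      rw [hrel_iff]
      rw [← hstabA, GenFormMore.localStab_iff O φ hO hφ horth]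
      exact fun k hk => (GenFormMore.w_eq_iff O φ hO k t u).mp (h k hk)
    · exact fun h k _ => h k
  have hB_iff : ∀ t u : Fin n → G,
      (∀ k ∈ Aᶜ, W k t = W k u) ↔ (∀ k, W k t = W k u) := by
    intro t u
    constructor
    · intro h
      rw [hrel_iff]
      rw [← hstabB, GenFormMore.localStab_iff O φ hO hφ horth]
      exact fun k hk => (GenFormMore.w_eq_iff O φ hO k t u).mp (h k hk)
    · exact fun h k _ => h k
  set coefR : ℝ := (Real.sqrt ((Fintype.card G) ^ n * Nat.card (globalStab O φ)))⁻¹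
    with hcoef
  have hcoefR : 0 ≤ coefR := inv_nonneg.mpr (Real.sqrt_nonneg _)
  set lam : ℝ := coefR * SF.card with hlam
  have hPsix : ∀ x, Psi O φ x = (coefR : ℂ) * ∑ t : Fin n → G, actVec O φ t x :=
    fun x => rfl
  have hswap : ∀ Φc : ((k : Fin m) → ι k) → ℂ,
      ∑ x : (k : Fin m) → ι k, (starRingEnd ℂ) (Φc x) * Psi O φ x
        = (coefR : ℂ) * ∑ t : Fin n → G,
            ∑ x : (k : Fin m) → ι k, (starRingEnd ℂ) (Φc x) * actVec O φ t x := by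
    intro Φc
    simp only [hPsix]
    calc ∑ x : (k : Fin m) → ι k,
          (starRingEnd ℂ) (Φc x) * ((coefR:ℂ) * ∑ t : Fin n → G, actVec O φ t x)
        = ∑ x : (k : Fin m) → ι k, ∑ t : Fin n → G,
            (starRingEnd ℂ) (Φc x) * ((coefR:ℂ) * actVec O φ t x) := by
          refine Finset.sum_congr rfl fun x _ => ?_
          rw [Finset.mul_sum, Finset.mul_sum]
      _ = ∑ t : Fin n → G, ∑ x : (k : Fin m) → ι k,
            (starRingEnd ℂ) (Φc x) * ((coefR:ℂ) * actVec O φ t x) := Finset.sum_comm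
      _ = (coefR : ℂ) * ∑ t : Fin n → G,
            ∑ x : (k : Fin m) → ι k, (starRingEnd ℂ) (Φc x) * actVec O φ t x := by
          rw [Finset.mul_sum]
          refine Finset.sum_congr rfl fun t _ => ?_
          rw [Finset.mul_sum]
          exact Finset.sum_congr rfl fun x _ => by ring
  have key : ∀ Φc, IsProd Φc →
      ‖∑ x : (k : Fin m) → ι k, (starRingEnd ℂ) (Φc x) * Psi O φ x‖ ≤ lam := by
    rintro Φc ⟨χ, hχn, hχe⟩
    set c' : Fin m → (Fin n → G) → ℂ :=
      fun k t => ∑ y, (starRingEnd ℂ) (χ k y) * W k t y with hc'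
    have hinner : ∀ t : Fin n → G,
        ∑ x : (k : Fin m) → ι k, (starRingEnd ℂ) (Φc x) * actVec O φ t x
          = ∏ k, c' k t := by
      intro t
      have h0 : ∑ x : (k : Fin m) → ι k, (starRingEnd ℂ) (Φc x) * actVec O φ t x
          = ∑ x : (k : Fin m) → ι k,
              (starRingEnd ℂ) (∏ k, χ k (x k)) * ∏ k, W k t (x k) := by
        refine Finset.sum_congr rfl fun x _ => ?_
        rw [hχe x]
        rfl
      rw [h0]
      exact GenFormMore.prod_inner (fun k => χ k) (fun k => W k t)
    -- the setoid of global equivalence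
    let r : Setoid (Fin n → G) :=
      ⟨fun t u => ∀ k, W k t = W k u,
        ⟨fun t k => rfl, fun h k => (h k).symm, fun h1 h2 k => (h1 k).trans (h2 k)⟩⟩
    haveI : DecidableEq (Quotient r) := Classical.decEq _
    haveI : Fintype (Quotient r) :=
      Fintype.ofSurjective (Quotient.mk r) (fun q => ⟨q.out, q.out_eq⟩)
    let a : Quotient r → ℂ := fun q => ∏ k ∈ A, c' k q.out
    let b : Quotient r → ℂ := fun q => ∏ k ∈ Aᶜ, c' k q.out
    have hout : ∀ t : Fin n → G, ∀ k, W k (Quotient.mk r t).out = W k t := by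
      intro t
      exact Quotient.exact ((Quotient.mk r t).out_eq)
    have hsplit : ∀ t : Fin n → G,
        ∏ k, c' k t = a (Quotient.mk r t) * b (Quotient.mk r t) := by
      intro t
      have hc : ∀ k, c' k (Quotient.mk r t).out = c' k t := by
        intro k
        simp only [hc', hout t k]
      rw [← Finset.prod_mul_prod_compl A (fun k => c' k t)]
      have e1 : a (Quotient.mk r t) = ∏ k ∈ A, c' k t :=
        Finset.prod_congr rfl fun k _ => hc k
      have e2 : b (Quotient.mk r t) = ∏ k ∈ Aᶜ, c' k t :=
        Finset.prod_congr rfl fun k _ => hc k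
      rw [e1, e2]
    -- Bessel bound for a family given a part X of the parties
    have bessel : ∀ (X : Finset (Fin m)),
        (∀ t u : Fin n → G, (∀ k ∈ X, W k t = W k u) ↔ (∀ k, W k t = W k u)) →
        ∑ q : Quotient r, ‖∏ k ∈ X, c' k q.out‖ ^ 2 ≤ 1 := by
      intro X hX_iff
      let V : Quotient r → EuclideanSpace ℂ ((k : Fin m) → ι k) :=
        fun q => WithLp.toLp 2 (actVecOn O φ X q.out)
      let gX : (k : Fin m) → ι k → ℂ := fun k y => if k ∈ X then χ k y else φ k y
      let χX : EuclideanSpace ℂ ((k : Fin m) → ι k) :=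
          WithLp.toLp 2 (fun x => ∏ k, gX k (x k))
      have hinnerE : ∀ v w : EuclideanSpace ℂ ((k : Fin m) → ι k),
          (inner ℂ v w : ℂ) = ∑ x : (k : Fin m) → ι k, (starRingEnd ℂ) (v x) * w x := by
        intro v w
        simp [PiLp.inner_apply, RCLike.inner_apply]
        exact Finset.sum_congr rfl fun x _ => mul_comm _ _
      have horthoV : Orthonormal ℂ V := by
        rw [orthonormal_iff_ite]
        intro q q'
        rw [hinnerE]
        have := GenFormMore.inner_actVecOn O φ hO hφ horth X q.out q'.out
        rw [← hW] at this
        rw [this]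
        by_cases h : q = q'
        · subst h
          rw [if_pos (fun k _ => rfl), if_pos rfl]
        · rw [if_neg h, if_neg]
          intro hc
          apply h
          have h2 : ∀ k, W k q.out = W k q'.out := (hX_iff _ _).mp hc
          have h3 : Quotient.mk r q.out = Quotient.mk r q'.out := Quotient.sound h2
          rwa [Quotient.out_eq, Quotient.out_eq] at h3
      have hov : ∀ q : Quotient r,
          (inner ℂ (V q) χX : ℂ) = (starRingEnd ℂ) (∏ k ∈ X, c' k q.out) := by
        intro q
        rw [hinnerE]
        have h1 : ∑ x : (k : Fin m) → ι k, (starRingEnd ℂ) (V q x) * χX x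
            = ∏ k, ∑ y, (starRingEnd ℂ)
                ((fun k y => if k ∈ X then W k q.out y else φ k y) k y) * gX k y :=
          GenFormMore.prod_inner (fun k y => if k ∈ X then W k q.out y else φ k y) gX
        rw [h1]
        have h2 : ∀ k : Fin m, (∑ y, (starRingEnd ℂ)
              ((fun k y => if k ∈ X then W k q.out y else φ k y) k y) * gX k y)
            = if k ∈ X then ∑ y, (starRingEnd ℂ) (W k q.out y) * χ k y else 1 := by
          intro k
          by_cases hk : k ∈ X
          · simp only [gX, hk, if_true]
          · simp only [gX, hk, if_false]
            rw [GenFormMore.conj_sum_eq, hφ k]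
            norm_num
        rw [Finset.prod_congr rfl fun k _ => h2 k, ← Finset.prod_filter,
          Finset.filter_mem_eq_inter, Finset.univ_inter]
        rw [map_prod]
        refine Finset.prod_congr rfl fun k _ => ?_
        rw [hc']
        rw [map_sum]
        refine Finset.sum_congr rfl fun y _ => ?_
        rw [map_mul, Complex.conj_conj, mul_comm]
      have hnormX : ‖χX‖ ^ 2 = 1 := by
        rw [EuclideanSpace.norm_eq, Real.sq_sqrt (Finset.sum_nonneg fun x _ => by positivity)]
        have h1 : ∀ x : (k : Fin m) → ι k,
            ‖χX x‖ ^ 2 = ∏ k, (fun k y => ‖gX k y‖ ^ 2) k (x k) := by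
          intro x
          rw [show χX x = ∏ k, gX k (x k) from rfl, norm_prod, ← Finset.prod_pow]
        rw [Finset.sum_congr rfl fun x _ => h1 x,
          ← Fintype.prod_sum (f := fun k y => ‖gX k y‖ ^ 2)]
        rw [Finset.prod_congr rfl (fun k _ => ?_), Finset.prod_const_one]
        by_cases hk : k ∈ X
        · simp only [gX, hk, if_true]
          exact hχn k
        · simp only [gX, hk, if_false]
          exact hφ k
      have hbes := horthoV.sum_inner_products_le (s := Finset.univ) χX
      rw [hnormX] at hbes
      refine le_trans (le_of_eq ?_) hbes
      refine Finset.sum_congr rfl fun q _ => ?_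
      rw [hov q]
      rw [Complex.norm_conj]
    have hbA : ∑ q : Quotient r, ‖a q‖ ^ 2 ≤ 1 := bessel A hA_iff
    have hbB : ∑ q : Quotient r, ‖b q‖ ^ 2 ≤ 1 := bessel Aᶜ hB_iff
    -- grouping the sum over the group into classes
    have hfib : ∀ q : Quotient r,
        (Finset.univ.filter fun t => Quotient.mk r t = q).card = SF.card := by
      intro q
      have h1 : ∀ t, (Quotient.mk r t = q) ↔ (∀ k, W k t = W k q.out) := by
        intro t
        constructor
        · intro h
          exact Quotient.exact (h.trans q.out_eq.symm)
        · intro h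
          rw [← q.out_eq]
          exact Quotient.sound h
      rw [Finset.filter_congr fun t _ => h1 t, hcount q.out]
    have hgroup : ∑ t : Fin n → G, ∏ k, c' k t
        = (SF.card : ℂ) * ∑ q : Quotient r, a q * b q := by
      rw [Finset.sum_congr rfl fun t _ => hsplit t]
      rw [Finset.sum_comp (fun q => a q * b q) (Quotient.mk r)]
      rw [Finset.image_univ_of_surjective (fun q => ⟨q.out, q.out_eq⟩)]
      rw [Finset.sum_congr rfl fun q _ => by rw [hfib q]]
      rw [Finset.mul_sum]
      exact Finset.sum_congr rfl fun q _ => by rw [nsmul_eq_mul]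
    -- Cauchy-Schwarz
    have habs1 : ‖∑ q : Quotient r, a q * b q‖ ≤ 1 := by
      have h1 : ‖∑ q : Quotient r, a q * b q‖
          ≤ ∑ q : Quotient r, ‖a q‖ * ‖b q‖ := by
        refine le_trans (norm_sum_le _ _) ?_
        exact le_of_eq (Finset.sum_congr rfl fun q _ => norm_mul _ _)
      have hcs := Finset.sum_mul_sq_le_sq_mul_sq Finset.univ
        (fun q : Quotient r => ‖a q‖) (fun q => ‖b q‖)
      have hnn : (0:ℝ) ≤ ∑ q : Quotient r, ‖a q‖ * ‖b q‖ :=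
        Finset.sum_nonneg fun q _ => mul_nonneg (norm_nonneg _) (norm_nonneg _)
      have hf2 : (0:ℝ) ≤ ∑ q : Quotient r, ‖b q‖ ^ 2 :=
        Finset.sum_nonneg fun q _ => sq_nonneg _
      have hprod : (∑ q : Quotient r, ‖a q‖ ^ 2) *
          (∑ q : Quotient r, ‖b q‖ ^ 2) ≤ 1 := by
        nlinarith [hbA, hbB, hf2]
      have hsq := hcs.trans hprod
      nlinarith [hnn, hsq, h1]
    -- final estimate
    rw [hswap Φc, Finset.sum_congr rfl fun t _ => hinner t, hgroup]
    rw [norm_mul, norm_mul, Complex.norm_real, Real.norm_eq_abs, Complex.norm_natCast,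
      abs_of_nonneg hcoefR, hlam]
    calc coefR * ((SF.card : ℝ) * ‖∑ q : Quotient r, a q * b q‖)
        ≤ coefR * ((SF.card : ℝ) * 1) := by
          gcongr
      _ = coefR * SF.card := by ring
  have hval : ‖∑ x : (k : Fin m) → ι k,
      (starRingEnd ℂ) (prodVec φ x) * Psi O φ x‖ = lam := by
    have h1 : ∀ t : Fin n → G,
        ∑ x : (k : Fin m) → ι k, (starRingEnd ℂ) (prodVec φ x) * actVec O φ t x
          = if ∀ k, W k 1 = W k t then (1:ℂ) else 0 := by
      intro t
      have hf : ∀ x : (k : Fin m) → ι k, prodVec φ x = ∏ k, W k 1 (x k) := by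
        intro x
        exact Finset.prod_congr rfl fun k _ =>
          (congrFun (GenFormMore.w_one O φ hO k) (x k)).symm
      have : ∑ x : (k : Fin m) → ι k, (starRingEnd ℂ) (prodVec φ x) * actVec O φ t x
          = ∑ x : (k : Fin m) → ι k,
              (starRingEnd ℂ) (∏ k, W k 1 (x k)) * ∏ k, W k t (x k) := by
        refine Finset.sum_congr rfl fun x _ => ?_
        rw [hf x]
        rfl
      rw [this, GenFormMore.prod_inner (fun k => W k 1) (fun k => W k t)]
      have : ∀ k : Fin m, (∑ y : ι k, (starRingEnd ℂ) (W k 1 y) * W k t y)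
          = if W k 1 = W k t then (1:ℂ) else 0 := fun k =>
        GenFormMore.ip_eq_ite O φ hO hφ horth k 1 t
      rw [Finset.prod_congr rfl fun k _ => this k, Finset.prod_boole]
      simp
    rw [hswap (prodVec φ), Finset.sum_congr rfl fun t _ => h1 t, Finset.sum_boole]
    have : (Finset.univ.filter fun t : Fin n → G => ∀ k, W k 1 = W k t) = 
        (Finset.univ.filter fun t : Fin n → G => ∀ k, W k t = W k 1) := by
      refine Finset.filter_congr fun t _ => forall_congr' fun k => eq_comm
    rw [this, hcount 1]
    rw [norm_mul, Complex.norm_real, Real.norm_eq_abs, Complex.norm_natCast, abs_of_nonneg hcoefR, hlam]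
  have hLM : LMax (Psi O φ) = lam := by
    have hmem : lam ∈ { r : ℝ | ∃ Φ, IsProd Φ ∧
        r = ‖∑ x : (k : Fin m) → ι k, (starRingEnd ℂ) (Φ x) * Psi O φ x‖ } :=
      ⟨prodVec φ, ⟨φ, hφ, fun x => rfl⟩, hval.symm⟩
    have hub : ∀ r ∈ { r : ℝ | ∃ Φ, IsProd Φ ∧
        r = ‖∑ x : (k : Fin m) → ι k, (starRingEnd ℂ) (Φ x) * Psi O φ x‖ },
        r ≤ lam := by
      rintro r ⟨Φc, hP, rfl⟩
      exact key Φc hP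
    have hlam0 : 0 ≤ lam := mul_nonneg hcoefR (Nat.cast_nonneg _)
    exact le_antisymm (Real.sSup_le hub hlam0) (le_csSup ⟨lam, hub⟩ hmem)
  -- final numeric computation
  have hg : (0:ℝ) < (Fintype.card G : ℝ) ^ n := by positivity
  have hs : (0:ℝ) < (SF.card : ℝ) := by exact_mod_cast hSFpos
  have hlamsq : lam ^ 2 = (SF.card : ℝ) / ((Fintype.card G : ℝ) ^ n) := by
    rw [hlam, hcoef, hcardS, mul_pow, inv_pow, Real.sq_sqrt (by positivity)]
    push_cast
    field_simp
  rw [EG, hLM, hlamsq, hcardS]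
  rw [Real.logb_div (ne_of_gt hs) (ne_of_gt hg)]
  push_cast
  rw [Real.logb_pow]
  ring
end GenForm
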